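/- Let p > 1, θ_p > 0, let A : ℝⁿ → ℝᵐ be a linear map, and let b ∈ ℝᵐ. Define f(x) = (1/2)‖Ax − b‖² + (θ_p/p)∑_{i=1}^n |x_i|^p and φ(x) = (1/2)‖x‖² + (1/p)∑_{i=1}^n |x_i|^p. Then for every L > 0 with L ≥ ‖A‖² + θ_p, where ‖A‖ is the operator norm of A with respect to the Euclidean norms (so that ‖A‖² equals the largest eigenvalue of AᵀA), both functions L·φ − f and L·φ + f are convex on ℝⁿ; that is, the pair (f, φ) is L-smad on ℝⁿ. -/

import Mathlib

open Set Finset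

private lemma abs_rpow_convex {p : ℝ} (hp : 1 ≤ p) :
    ConvexOn ℝ Set.univ (fun t : ℝ => |t| ^ p) := by
  constructor
  · exact convex_univ
  · intro x _ y _ a b ha hb hab
    have h1 : |a • x + b • y| ^ p ≤ (a * |x| + b * |y|) ^ p := by
      apply Real.rpow_le_rpow (abs_nonneg _)
      · calc |a • x + b • y| ≤ |a • x| + |b • y| := abs_add_le _ _
          _ = a * |x| + b * |y| := by
            simp [abs_mul, abs_of_nonneg ha, abs_of_nonneg hb, smul_eq_mul]
      · linarith [abs_nonneg x, abs_nonneg y, mul_nonneg ha (abs_nonneg x),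
          mul_nonneg hb (abs_nonneg y)]
    have h2 := (convexOn_rpow hp).2 (Set.mem_Ici.2 (abs_nonneg x))
      (Set.mem_Ici.2 (abs_nonneg y)) ha hb hab
    simp only [smul_eq_mul] at h2 ⊢
    exact h1.trans h2

private lemma sum_abs_rpow_convex {n : ℕ} {p : ℝ} (hp : 1 ≤ p) :
    ConvexOn ℝ Set.univ (fun x : EuclideanSpace ℝ (Fin n) => ∑ i, |x i| ^ p) := by
  have hterm : ∀ i : Fin n, ConvexOn ℝ Set.univ
      (fun x : EuclideanSpace ℝ (Fin n) => |x i| ^ p) := by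
    intro i
    have h := (abs_rpow_convex hp).comp_affineMap
      ((EuclideanSpace.proj i : EuclideanSpace ℝ (Fin n) →L[ℝ] ℝ)).toLinearMap.toAffineMap
    simpa [Function.comp_def] using h
  classical
  induction (Finset.univ : Finset (Fin n)) using Finset.cons_induction with
  | empty => simpa using convexOn_const (0 : ℝ) convex_univ
  | cons i s hi ih =>
    simp only [Finset.sum_cons]
    exact (hterm i).add ih

private lemma quad_convex {n m : ℕ} (A : EuclideanSpace ℝ (Fin n) →L[ℝ] EuclideanSpace ℝ (Fin m))
    (b : EuclideanSpace ℝ (Fin m)) (L ε : ℝ)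
    (h : ∀ z, 0 ≤ L * ‖z‖ ^ 2 + ε * ‖A z‖ ^ 2) :
    ConvexOn ℝ Set.univ (fun x => L * ‖x‖ ^ 2 + ε * ‖A x - b‖ ^ 2) := by
  constructor
  · exact convex_univ
  · intro x _ y _ a c ha hc hac
    have key : ∀ (u v : EuclideanSpace ℝ (Fin n)) (s t : ℝ),
        ‖s • u + t • v‖ ^ 2 = s ^ 2 * ‖u‖ ^ 2 + 2 * s * t * inner ℝ u v + t ^ 2 * ‖v‖ ^ 2 := by
      intro u v s t
      rw [← real_inner_self_eq_norm_sq, ← real_inner_self_eq_norm_sq,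
        ← real_inner_self_eq_norm_sq]
      simp only [inner_add_left, inner_add_right, real_inner_smul_left, real_inner_smul_right]
      rw [real_inner_comm v u]
      ring
    have keym : ∀ (u v : EuclideanSpace ℝ (Fin m)) (s t : ℝ),
        ‖s • u + t • v‖ ^ 2 = s ^ 2 * ‖u‖ ^ 2 + 2 * s * t * inner ℝ u v + t ^ 2 * ‖v‖ ^ 2 := by
      intro u v s t
      rw [← real_inner_self_eq_norm_sq, ← real_inner_self_eq_norm_sq,
        ← real_inner_self_eq_norm_sq]
      simp only [inner_add_left, inner_add_right, real_inner_smul_left, real_inner_smul_right]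
      rw [real_inner_comm v u]
      ring
    have e1 := key x y a c
    have hb : a • b + c • b = b := by rw [← add_smul, hac, one_smul]
    have e2 : A (a • x + c • y) - b = a • (A x - b) + c • (A y - b) := by
      have h2 : a • (A x - b) + c • (A y - b) = a • A x + c • A y - (a + c) • b := by
        module
      simp only [map_add, map_smul]
      rw [h2, hac, one_smul]
    have e3 := keym (A x - b) (A y - b) a c
    have e4 : x - y = (1 : ℝ) • x + (-1 : ℝ) • y := by module
    have e5 := key x y 1 (-1)
    have e6 : A x - b - (A y - b) = (1 : ℝ) • (A x - b) + (-1 : ℝ) • (A y - b) := by module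
    have hz := h (x - y)
    have hAxy : A (x - y) = A x - b - (A y - b) := by
      simp only [map_sub]; abel
    rw [hAxy, e4, e5, e6, keym (A x - b) (A y - b) 1 (-1)] at hz
    have hc1 : c = 1 - a := by linarith
    subst hc1
    have hprod := mul_nonneg (mul_nonneg ha hc) hz
    simp only [smul_eq_mul]
    rw [e2, e1, e3]
    nlinarith [hprod]

theorem lp_least_squares_Lsmad {n m : ℕ} (p θp : ℝ) (hp : 1 < p) (hθp : 0 < θp)
    (A : EuclideanSpace ℝ (Fin n) →L[ℝ] EuclideanSpace ℝ (Fin m))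
    (b : EuclideanSpace ℝ (Fin m))
    (f φ : EuclideanSpace ℝ (Fin n) → ℝ)
    (hfdef : f = fun x => (1 / 2) * ‖A x - b‖ ^ 2 + (θp / p) * ∑ i, |x i| ^ p)
    (hφdef : φ = fun x => (1 / 2) * ‖x‖ ^ 2 + (1 / p) * ∑ i, |x i| ^ p)
    (L : ℝ) (hL : 0 < L) (hLge : ‖A‖ ^ 2 + θp ≤ L) :
    ConvexOn ℝ Set.univ (fun x => L * φ x - f x) ∧
      ConvexOn ℝ Set.univ (fun x => L * φ x + f x) := by
  subst hfdef hφdef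
  have hp0 : (0 : ℝ) < p := lt_trans one_pos hp
  have hANL : ‖A‖ ^ 2 ≤ L := by nlinarith
  have hAsq : ∀ z : EuclideanSpace ℝ (Fin n), ‖A z‖ ^ 2 ≤ L * ‖z‖ ^ 2 := by
    intro z
    have h1 : ‖A z‖ ≤ ‖A‖ * ‖z‖ := A.le_opNorm z
    have h2 : ‖A z‖ ^ 2 ≤ (‖A‖ * ‖z‖) ^ 2 := by
      apply pow_le_pow_left₀ (norm_nonneg _) h1
    nlinarith [mul_nonneg (sub_nonneg.2 hANL) (sq_nonneg ‖z‖)]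
  have hsum := sum_abs_rpow_convex (n := n) (le_of_lt hp)
  have hLθ : 0 ≤ L - θp := by nlinarith [sq_nonneg ‖A‖]
  constructor
  · have hq := quad_convex A b L (-1) (fun z => by nlinarith [hAsq z])
    have hcomb := (hq.smul (by norm_num : (0:ℝ) ≤ 1/2)).add
      (hsum.smul (div_nonneg hLθ hp0.le))
    convert hcomb using 1
    · rfl
    · rfl
    funext x
    simp only [Pi.add_apply, smul_eq_mul]
    ring
  · have hq := quad_convex A b L 1 (fun z => by positivity)
    have hcomb := (hq.smul (by norm_num : (0:ℝ) ≤ 1/2)).add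
      (hsum.smul (div_nonneg (by linarith : (0:ℝ) ≤ L + θp) hp0.le))
    convert hcomb using 1
    · rfl
    · rfl
    funext x
    simp only [Pi.add_apply, smul_eq_mul]
    ring
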